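/- Let 0 < q₁ < p₁ ≤ 1, 0 < q₂ < p₂ ≤ 1, let n, m ≥ 1, and let f : [0,1]² → ℝ be continuous. Then for every (x,y) ∈ [0,1]², |B_{n,m}(f;x,y) - f(x,y)| ≤ 2 K(f, δ_{n,m}(x,y)/2), where δ_{n,m}(x,y) = (1/2) max( (p₁^{n-1}/[n]_{p₁,q₁})(x - x²), (p₂^{m-1}/[m]_{p₂,q₂})(y - y²) ) and K is the Peetre K-functional defined in the context. -/

import Mathlib

open Finset Set Filter Topology

/-- The (p,q)-integer `[n]_{p,q} = ∑_{i=0}^{n-1} p^(n-1-i) q^i`. -/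
noncomputable def pqInt (p q : ℝ) (n : ℕ) : ℝ :=
  ∑ i ∈ Finset.range n, p ^ (n - 1 - i) * q ^ i

/-- The (p,q)-factorial `[n]_{p,q}! = ∏_{j=1}^n [j]_{p,q}`. -/
noncomputable def pqFactorial (p q : ℝ) (n : ℕ) : ℝ :=
  ∏ j ∈ Finset.range n, pqInt p q (j + 1)

/-- The (p,q)-binomial coefficient. -/
noncomputable def pqChoose (p q : ℝ) (n k : ℕ) : ℝ :=
  pqFactorial p q n / (pqFactorial p q k * pqFactorial p q (n - k))

/-- The node `p^(n-k) [k]_{p,q} / [n]_{p,q}` of the (p,q)-Bernstein operator. -/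
noncomputable def pqNode (p q : ℝ) (n k : ℕ) : ℝ :=
  p ^ (n - k) * pqInt p q k / pqInt p q n

/-- The basis function
`p^((k(k-1)-n(n-1))/2) C(n,k)_{p,q} x^k ∏_{s=0}^{n-k-1} (p^s - q^s x)`,
where `p^((k(k-1)-n(n-1))/2)` is written as `p^(k(k-1)/2) / p^(n(n-1)/2)`. -/
noncomputable def pqBasis (p q : ℝ) (n k : ℕ) (x : ℝ) : ℝ :=
  (p ^ (k.choose 2) / p ^ (n.choose 2)) * pqChoose p q n k * x ^ k *
    ∏ s ∈ Finset.range (n - k), (p ^ s - q ^ s * x)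

/-- The (p,q)-Bernstein operator `B_{n,p,q}(f;x)`. -/
noncomputable def pqBernstein (p q : ℝ) (n : ℕ) (f : ℝ → ℝ) (x : ℝ) : ℝ :=
  ∑ k ∈ Finset.range (n + 1), pqBasis p q n k x * f (pqNode p q n k)

/-- The bivariate (p,q)-Bernstein operator
`B_{n,m}^{(p₁,q₁),(p₂,q₂)}(f;x,y)`. -/
noncomputable def pqBernstein2 (p₁ q₁ p₂ q₂ : ℝ) (n m : ℕ)
    (f : ℝ → ℝ → ℝ) (x y : ℝ) : ℝ :=
  ∑ k ∈ Finset.range (n + 1), ∑ j ∈ Finset.range (m + 1),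
    pqBasis p₁ q₁ n k x * pqBasis p₂ q₂ m j y *
      f (pqNode p₁ q₁ n k) (pqNode p₂ q₂ m j)

/-- The partial derivative with respect to the first variable. -/
noncomputable def pdx (g : ℝ → ℝ → ℝ) : ℝ → ℝ → ℝ :=
  fun x y => deriv (fun u => g u y) x

/-- The partial derivative with respect to the second variable. -/
noncomputable def pdy (g : ℝ → ℝ → ℝ) : ℝ → ℝ → ℝ :=
  fun x y => deriv (fun v => g x v) y

/-- The supremum norm of a bivariate function over `[0,1]²`. -/
noncomputable def supNorm2 (g : ℝ → ℝ → ℝ) : ℝ :=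
  sSup {d : ℝ | ∃ x ∈ Set.Icc (0 : ℝ) 1, ∃ y ∈ Set.Icc (0 : ℝ) 1, d = |g x y|}

/-- Membership in `C²([0,1]²)`: the function and its pure partial derivatives of
order one and two exist and are continuous on `[0,1]²`. -/
def IsC2On01 (g : ℝ → ℝ → ℝ) : Prop :=
  ContinuousOn (fun z : ℝ × ℝ => g z.1 z.2) (Set.Icc (0 : ℝ) 1 ×ˢ Set.Icc (0 : ℝ) 1) ∧
  (∀ x ∈ Set.Icc (0 : ℝ) 1, ∀ y ∈ Set.Icc (0 : ℝ) 1,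
    DifferentiableAt ℝ (fun u => g u y) x ∧
    DifferentiableAt ℝ (fun u => pdx g u y) x ∧
    DifferentiableAt ℝ (fun v => g x v) y ∧
    DifferentiableAt ℝ (fun v => pdy g x v) y) ∧
  ContinuousOn (fun z : ℝ × ℝ => pdx g z.1 z.2) (Set.Icc (0 : ℝ) 1 ×ˢ Set.Icc (0 : ℝ) 1) ∧
  ContinuousOn (fun z : ℝ × ℝ => pdy g z.1 z.2) (Set.Icc (0 : ℝ) 1 ×ˢ Set.Icc (0 : ℝ) 1) ∧
  ContinuousOn (fun z : ℝ × ℝ => pdx (pdx g) z.1 z.2)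
    (Set.Icc (0 : ℝ) 1 ×ˢ Set.Icc (0 : ℝ) 1) ∧
  ContinuousOn (fun z : ℝ × ℝ => pdy (pdy g) z.1 z.2)
    (Set.Icc (0 : ℝ) 1 ×ˢ Set.Icc (0 : ℝ) 1)

/-- The `C²` norm `‖g‖_∞ + ∑_{j=1}^2 (‖∂ʲg/∂xʲ‖_∞ + ‖∂ʲg/∂yʲ‖_∞)`. -/
noncomputable def C2Norm (g : ℝ → ℝ → ℝ) : ℝ :=
  supNorm2 g + (supNorm2 (pdx g) + supNorm2 (pdy g)) +
    (supNorm2 (pdx (pdx g)) + supNorm2 (pdy (pdy g)))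

/-- The Peetre K-functional. -/
noncomputable def peetreK (f : ℝ → ℝ → ℝ) (δ : ℝ) : ℝ :=
  sInf {d : ℝ | ∃ g : ℝ → ℝ → ℝ, IsC2On01 g ∧
    d = supNorm2 (fun x y => f x y - g x y) + δ * C2Norm g}

section PQ

variable {p q : ℝ} (hq : 0 < q) (hqp : q < p) (hp : p ≤ 1)

lemma pqInt_succ_left (p q : ℝ) (n : ℕ) :
    pqInt p q (n + 1) = p * pqInt p q n + q ^ n := by
  unfold pqInt
  rw [Finset.sum_range_succ, Finset.mul_sum]
  congr 1
  · apply Finset.sum_congr rfl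
    intro i hi
    have hi' : i < n := Finset.mem_range.mp hi
    have : n + 1 - 1 - i = (n - 1 - i) + 1 := by omega
    rw [this, pow_succ]
    ring
  · simp

lemma pqInt_succ_right (p q : ℝ) (n : ℕ) :
    pqInt p q (n + 1) = p ^ n + q * pqInt p q n := by
  unfold pqInt
  rw [Finset.sum_range_succ', Finset.mul_sum, add_comm]
  congr 1
  · simp
  · apply Finset.sum_congr rfl
    intro i hi
    have hi' : i < n := Finset.mem_range.mp hi
    have : n + 1 - 1 - (i + 1) = n - 1 - i := by omega
    rw [this, pow_succ]
    ring

lemma pqInt_add (p q : ℝ) (a b : ℕ) :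
    pqInt p q (a + b) = p ^ b * pqInt p q a + q ^ a * pqInt p q b := by
  induction b with
  | zero => simp [pqInt]
  | succ b ih =>
      rw [← add_assoc, pqInt_succ_left, ih, pqInt_succ_left, pow_succ, pow_add]
      ring

include hq hqp in
lemma pqInt_pos {n : ℕ} (hn : 1 ≤ n) : 0 < pqInt p q n := by
  obtain ⟨m, rfl⟩ := Nat.exists_eq_add_of_le hn
  rw [add_comm, pqInt_succ_left]
  have hp0 : 0 < p := hq.trans hqp
  have : 0 ≤ pqInt p q m := by
    unfold pqInt
    positivity
  positivity

include hq hqp in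
lemma pqInt_nonneg (n : ℕ) : 0 ≤ pqInt p q n := by
  have hp0 : 0 < p := hq.trans hqp
  unfold pqInt; positivity

include hq hqp in
lemma pqFactorial_pos (n : ℕ) : 0 < pqFactorial p q n := by
  unfold pqFactorial
  exact Finset.prod_pos fun j _ => pqInt_pos hq hqp (Nat.succ_le_succ (Nat.zero_le j))

include hq hqp in
lemma pqChoose_pos (n k : ℕ) : 0 < pqChoose p q n k := by
  unfold pqChoose
  exact div_pos (pqFactorial_pos hq hqp n)
    (mul_pos (pqFactorial_pos hq hqp k) (pqFactorial_pos hq hqp (n - k)))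

include hq hqp in
lemma pqChoose_zero (n : ℕ) : pqChoose p q n 0 = 1 := by
  unfold pqChoose
  rw [show pqFactorial p q 0 = 1 from by simp [pqFactorial]]
  rw [one_mul, Nat.sub_zero, div_self (pqFactorial_pos hq hqp n).ne']

include hq hqp in
lemma pqChoose_self (n : ℕ) : pqChoose p q n n = 1 := by
  unfold pqChoose
  rw [Nat.sub_self, show pqFactorial p q 0 = 1 from by simp [pqFactorial]]
  rw [mul_one, div_self (pqFactorial_pos hq hqp n).ne']

lemma pqFactorial_succ (p q : ℝ) (n : ℕ) :
    pqFactorial p q (n + 1) = pqFactorial p q n * pqInt p q (n + 1) := by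
  unfold pqFactorial
  rw [Finset.prod_range_succ]

end PQ
section PQ2

variable {p q : ℝ}

/-- auxiliary unnormalized basis -/
noncomputable def pqA (p q : ℝ) (n k : ℕ) (x : ℝ) : ℝ :=
  p ^ (k.choose 2) * pqChoose p q n k * x ^ k *
    ∏ s ∈ Finset.range (n - k), (p ^ s - q ^ s * x)

noncomputable def auxG (p q x : ℝ) (n k : ℕ) : ℝ :=
  if k ≤ n ∧ 1 ≤ k then pqA p q n k x * (p ^ n - p ^ k * q ^ (n - k) * x) else 0

noncomputable def auxC (p q x : ℝ) (n k : ℕ) : ℝ :=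
  pqA p q n k x * (p ^ k * q ^ (n - k) * x)

variable (hq : 0 < q) (hqp : q < p)

include hq hqp in
lemma pqChoose_pascal {n k : ℕ} (hk : k < n) :
    pqChoose p q (n + 1) (k + 1) =
      p ^ (k + 1) * pqChoose p q n (k + 1) + q ^ (n - k) * pqChoose p q n k := by
  obtain ⟨r, rfl⟩ : ∃ r, n = k + 1 + r := ⟨n - (k + 1), by omega⟩
  have e1 : k + 1 + r + 1 - (k + 1) = r + 1 := by omega
  have e2 : k + 1 + r - (k + 1) = r := by omega
  have e3 : k + 1 + r - k = r + 1 := by omega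
  unfold pqChoose
  rw [e1, e2, e3, pqFactorial_succ, pqFactorial_succ p q k, pqFactorial_succ p q r]
  have key : pqInt p q (k + 1 + r + 1) = p ^ (k + 1) * pqInt p q (r + 1) + q ^ (r + 1) * pqInt p q (k + 1) := by
    have := pqInt_add p q (r + 1) (k + 1)
    rw [show r + 1 + (k + 1) = k + 1 + r + 1 by omega] at this
    linarith [this]
  have hF : ∀ m : ℕ, pqFactorial p q m ≠ 0 := fun m => (pqFactorial_pos hq hqp m).ne'
  have hI : ∀ m : ℕ, pqInt p q (m + 1) ≠ 0 := fun m => (pqInt_pos hq hqp (Nat.succ_le_succ (Nat.zero_le m))).ne'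
  have hI1 : pqInt p q (1 + r) ≠ 0 := by rw [add_comm]; exact hI r
  have hI2 : pqInt p q (1 + k) ≠ 0 := by rw [add_comm]; exact hI k
  have d1 : pqFactorial p q k * pqInt p q (k + 1) * (pqFactorial p q r * pqInt p q (r + 1)) ≠ 0 :=
    mul_ne_zero (mul_ne_zero (hF k) (hI k)) (mul_ne_zero (hF r) (hI r))
  have d2 : pqFactorial p q k * pqInt p q (k + 1) * pqFactorial p q r ≠ 0 :=
    mul_ne_zero (mul_ne_zero (hF k) (hI k)) (hF r)
  have d3 : pqFactorial p q k * (pqFactorial p q r * pqInt p q (r + 1)) ≠ 0 :=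
    mul_ne_zero (hF k) (mul_ne_zero (hF r) (hI r))
  rw [key, ← mul_div_assoc, ← mul_div_assoc]
  rw [div_add_div _ _ d2 d3, div_eq_div_iff d1 (mul_ne_zero d2 d3)]
  ring

include hq hqp in
lemma pqChoose_mul_int (m j : ℕ) :
    pqChoose p q (m + 1) (j + 1) * pqInt p q (j + 1) =
      pqInt p q (m + 1) * pqChoose p q m j := by
  unfold pqChoose
  rw [Nat.succ_sub_succ, pqFactorial_succ, pqFactorial_succ p q j]
  have hF : ∀ a : ℕ, pqFactorial p q a ≠ 0 := fun a => (pqFactorial_pos hq hqp a).ne'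
  have hI : ∀ a : ℕ, pqInt p q (a + 1) ≠ 0 := fun a => (pqInt_pos hq hqp (Nat.succ_le_succ (Nat.zero_le a))).ne'
  have hI1 : pqInt p q (1 + j) ≠ 0 := by rw [add_comm]; exact hI j
  have hI2 : pqInt p q (1 + m) ≠ 0 := by rw [add_comm]; exact hI m
  rw [div_mul_eq_mul_div, ← mul_div_assoc]
  rw [div_eq_div_iff
    (mul_ne_zero (mul_ne_zero (hF j) (hI j)) (hF (m - j)))
    (mul_ne_zero (hF j) (hF (m - j)))]
  ring

lemma choose_two_succ (k : ℕ) : (k + 1).choose 2 = k.choose 2 + k := by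
  rw [show (2:ℕ) = 1 + 1 from rfl, Nat.choose_succ_succ]
  simp [Nat.choose_one_right, Nat.add_comm]

include hq hqp in
lemma pq_key (n : ℕ) (x : ℝ) :
    ∀ k ∈ Finset.range (n + 1),
      pqA p q (n + 1) (k + 1) x = auxG p q x n (k + 1) + auxC p q x n k := by
  intro k hk
  have hkn : k ≤ n := Nat.lt_succ_iff.mp (Finset.mem_range.mp hk)
  rcases eq_or_lt_of_le hkn with rfl | hklt
  · -- k = n : top term, G vanishes
    rw [auxG, if_neg (by omega), auxC, zero_add]
    unfold pqA
    rw [pqChoose_self hq hqp, pqChoose_self hq hqp]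
    simp only [Nat.sub_self, Nat.succ_sub_succ, Finset.range_zero, Finset.prod_empty]
    rw [choose_two_succ, pow_add]
    ring
  · obtain ⟨r, rfl⟩ : ∃ r, n = k + 1 + r := ⟨n - (k + 1), by omega⟩
    rw [auxG, if_pos (by omega), auxC]
    unfold pqA
    rw [pqChoose_pascal hq hqp (show k < k + 1 + r by omega)]
    simp only [Nat.succ_sub_succ, show k + 1 + r - (k + 1) = r by omega,
      show k + 1 + r - k = r + 1 by omega, show k + 1 + r + 1 - (k + 1) = r + 1 by omega]
    rw [Finset.prod_range_succ, choose_two_succ, pow_add, pow_add, pow_add]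
    ring

include hq hqp in
lemma pq_sumA (n : ℕ) (x : ℝ) :
    ∑ k ∈ Finset.range (n + 1), pqA p q n k x = p ^ (n.choose 2) := by
  induction n with
  | zero =>
      simp [pqA, pqChoose_zero hq hqp]
  | succ n ih =>
      have G0 : auxG p q x n 0 = 0 := by rw [auxG, if_neg (by omega)]
      have Gn1 : auxG p q x n (n + 1) = 0 := by rw [auxG, if_neg (by omega)]
      have h0 : pqA p q (n + 1) 0 x
          = pqA p q n 0 x * (p ^ n - p ^ 0 * q ^ (n - 0) * x) := by
        unfold pqA
        rw [pqChoose_zero hq hqp, pqChoose_zero hq hqp, Nat.sub_zero, Nat.sub_zero,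
          Finset.prod_range_succ]
        ring
      have Gshift : ∑ k ∈ Finset.range (n + 1), auxG p q x n (k + 1)
          = ∑ k ∈ Finset.range (n + 1), auxG p q x n k := by
        have h1 := Finset.sum_range_succ' (auxG p q x n) (n + 1)
        have h2 := Finset.sum_range_succ (auxG p q x n) (n + 1)
        rw [h2, Gn1, add_zero] at h1
        rw [G0, add_zero] at h1
        linarith [h1]
      have hCG : ∀ k ∈ Finset.range (n + 1),
          auxG p q x n k + (auxC p q x n k
            + (if k = 0 then pqA p q n 0 x * (p ^ n - p ^ 0 * q ^ (n - 0) * x) else 0))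
          = pqA p q n k x * p ^ n := by
        intro k hk
        have hkn : k ≤ n := Nat.lt_succ_iff.mp (Finset.mem_range.mp hk)
        rcases Nat.eq_zero_or_pos k with rfl | hkpos
        · rw [auxG, if_neg (by omega), auxC, if_pos rfl]
          ring
        · rw [auxG, if_pos ⟨hkn, hkpos⟩, auxC, if_neg (by omega)]
          ring
      calc ∑ k ∈ Finset.range (n + 1 + 1), pqA p q (n + 1) k x
          = (∑ k ∈ Finset.range (n + 1), pqA p q (n + 1) (k + 1) x) + pqA p q (n + 1) 0 x :=
            Finset.sum_range_succ' _ _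
        _ = (∑ k ∈ Finset.range (n + 1), (auxG p q x n (k + 1) + auxC p q x n k))
            + pqA p q n 0 x * (p ^ n - p ^ 0 * q ^ (n - 0) * x) := by
            rw [Finset.sum_congr rfl (pq_key hq hqp n x), h0]
        _ = ∑ k ∈ Finset.range (n + 1),
              (auxG p q x n k + (auxC p q x n k
                + (if k = 0 then pqA p q n 0 x * (p ^ n - p ^ 0 * q ^ (n - 0) * x) else 0))) := by
            rw [Finset.sum_add_distrib, Finset.sum_add_distrib, Finset.sum_add_distrib, Gshift,
              Finset.sum_ite_eq' (Finset.range (n + 1)) 0]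
            simp only [Finset.mem_range, Nat.succ_pos, if_pos, Nat.add_pos_right]
            ring
        _ = ∑ k ∈ Finset.range (n + 1), pqA p q n k x * p ^ n := Finset.sum_congr rfl hCG
        _ = p ^ ((n + 1).choose 2) := by
            rw [← Finset.sum_mul, ih, choose_two_succ, pow_add]

end PQ2
section PQ3

variable {p q : ℝ} (hq : 0 < q) (hqp : q < p)

lemma pqInt_zero (p q : ℝ) : pqInt p q 0 = 0 := by simp [pqInt]

include hq hqp in
lemma pq_sumA1 (n : ℕ) (x : ℝ) :
    ∑ k ∈ Finset.range (n + 1), pqA p q n k x * (p ^ (n - k) * pqInt p q k)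
      = pqInt p q n * x * p ^ (n - 1) * p ^ ((n - 1).choose 2) := by
  rcases n with _ | m
  · simp [pqInt_zero]
  · rw [Finset.sum_range_succ']
    rw [show pqA p q (m + 1) 0 x * (p ^ (m + 1 - 0) * pqInt p q 0) = 0 by
      rw [pqInt_zero]; ring]
    rw [add_zero]
    have point : ∀ k ∈ Finset.range (m + 1),
        pqA p q (m + 1) (k + 1) x * (p ^ (m + 1 - (k + 1)) * pqInt p q (k + 1))
          = pqInt p q (m + 1) * x * p ^ m * pqA p q m k x := by
      intro k hk
      have hkm : k ≤ m := Nat.lt_succ_iff.mp (Finset.mem_range.mp hk)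
      have hpow : p ^ k * p ^ (m - k) = p ^ m := by
        rw [← pow_add]; congr 1; omega
      calc pqA p q (m + 1) (k + 1) x * (p ^ (m + 1 - (k + 1)) * pqInt p q (k + 1))
          = (pqChoose p q (m + 1) (k + 1) * pqInt p q (k + 1)) *
            (p ^ (k.choose 2) * (p ^ k * p ^ (m - k)) * x ^ (k + 1) *
              ∏ s ∈ Finset.range (m - k), (p ^ s - q ^ s * x)) := by
            unfold pqA
            rw [Nat.succ_sub_succ, choose_two_succ, pow_add]
            ring
        _ = pqInt p q (m + 1) * x * p ^ m * pqA p q m k x := by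
            rw [pqChoose_mul_int hq hqp, hpow]
            unfold pqA
            ring
    rw [Finset.sum_congr rfl point, ← Finset.mul_sum, pq_sumA hq hqp]
    simp only [Nat.add_sub_cancel]

lemma pq_pow_aux (m : ℕ) :
    pqInt p q m * (p ^ (m - 1) * p ^ ((m - 1).choose 2)) = pqInt p q m * p ^ (m.choose 2) := by
  rcases m with _ | r
  · simp [pqInt_zero]
  · simp only [Nat.add_sub_cancel]
    rw [choose_two_succ, pow_add]
    ring

include hq hqp in
lemma pq_sumA2 (m : ℕ) (x : ℝ) :
    ∑ k ∈ Finset.range (m + 1 + 1),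
        pqA p q (m + 1) k x * (p ^ (m + 1 - k) * pqInt p q k) ^ 2
      = pqInt p q (m + 1) * x * p ^ m * p ^ (m.choose 2) *
          (p ^ m + q * (pqInt p q m * x)) := by
  rw [Finset.sum_range_succ']
  rw [show pqA p q (m + 1) 0 x * (p ^ (m + 1 - 0) * pqInt p q 0) ^ 2 = 0 by
    rw [pqInt_zero]; ring]
  rw [add_zero]
  have point : ∀ k ∈ Finset.range (m + 1),
      pqA p q (m + 1) (k + 1) x * (p ^ (m + 1 - (k + 1)) * pqInt p q (k + 1)) ^ 2
        = pqInt p q (m + 1) * x * p ^ m *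
            (pqA p q m k x * p ^ m + q * (pqA p q m k x * (p ^ (m - k) * pqInt p q k))) := by
    intro k hk
    have hkm : k ≤ m := Nat.lt_succ_iff.mp (Finset.mem_range.mp hk)
    have hpow : p ^ k * p ^ (m - k) = p ^ m := by
      rw [← pow_add]; congr 1; omega
    have step1 : pqA p q (m + 1) (k + 1) x * (p ^ (m + 1 - (k + 1)) * pqInt p q (k + 1))
        = pqInt p q (m + 1) * x * p ^ m * pqA p q m k x := by
      calc pqA p q (m + 1) (k + 1) x * (p ^ (m + 1 - (k + 1)) * pqInt p q (k + 1))
          = (pqChoose p q (m + 1) (k + 1) * pqInt p q (k + 1)) *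
            (p ^ (k.choose 2) * (p ^ k * p ^ (m - k)) * x ^ (k + 1) *
              ∏ s ∈ Finset.range (m - k), (p ^ s - q ^ s * x)) := by
            unfold pqA
            rw [Nat.succ_sub_succ, choose_two_succ, pow_add]
            ring
        _ = pqInt p q (m + 1) * x * p ^ m * pqA p q m k x := by
            rw [pqChoose_mul_int hq hqp, hpow]
            unfold pqA
            ring
    calc pqA p q (m + 1) (k + 1) x * (p ^ (m + 1 - (k + 1)) * pqInt p q (k + 1)) ^ 2
        = (pqA p q (m + 1) (k + 1) x * (p ^ (m + 1 - (k + 1)) * pqInt p q (k + 1))) *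
            (p ^ (m + 1 - (k + 1)) * pqInt p q (k + 1)) := by ring
      _ = pqInt p q (m + 1) * x * p ^ m * (pqA p q m k x * (p ^ (m - k) * pqInt p q (k + 1))) := by
          rw [step1, Nat.succ_sub_succ]; ring
      _ = pqInt p q (m + 1) * x * p ^ m *
            (pqA p q m k x * p ^ m + q * (pqA p q m k x * (p ^ (m - k) * pqInt p q k))) := by
          rw [pqInt_succ_right p q k, mul_add, ← hpow]
          ring
  rw [Finset.sum_congr rfl point, ← Finset.mul_sum]
  rw [Finset.sum_add_distrib, ← Finset.sum_mul, ← Finset.mul_sum, pq_sumA hq hqp,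
    pq_sumA1 hq hqp]
  rw [show pqInt p q m * x * p ^ (m - 1) * p ^ ((m - 1).choose 2)
      = x * (pqInt p q m * (p ^ (m - 1) * p ^ ((m - 1).choose 2))) by ring,
    pq_pow_aux]
  ring

end PQ3
section PQ4

variable {p q : ℝ} (hq : 0 < q) (hqp : q < p) (hp : p ≤ 1)

include hq hqp in
lemma pqBasis_eq (n k : ℕ) (x : ℝ) :
    pqBasis p q n k x = pqA p q n k x / p ^ (n.choose 2) := by
  unfold pqBasis pqA
  ring

include hq hqp in
lemma pq_partition (n : ℕ) (x : ℝ) :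
    ∑ k ∈ Finset.range (n + 1), pqBasis p q n k x = 1 := by
  have hp0 : (0:ℝ) < p := hq.trans hqp
  rw [Finset.sum_congr rfl (fun k _ => pqBasis_eq hq hqp n k x), ← Finset.sum_div,
    pq_sumA hq hqp, div_self (pow_ne_zero _ hp0.ne')]

include hq hqp in
lemma pq_moment1 {n : ℕ} (hn : 1 ≤ n) (x : ℝ) :
    ∑ k ∈ Finset.range (n + 1), pqBasis p q n k x * pqNode p q n k = x := by
  have hp0 : (0:ℝ) < p := hq.trans hqp
  obtain ⟨m, rfl⟩ : ∃ m, n = m + 1 := ⟨n - 1, by omega⟩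
  have hN : pqInt p q (m + 1) ≠ 0 := (pqInt_pos hq hqp (by omega)).ne'
  have point : ∀ k ∈ Finset.range (m + 1 + 1),
      pqBasis p q (m + 1) k x * pqNode p q (m + 1) k
        = pqA p q (m + 1) k x * (p ^ (m + 1 - k) * pqInt p q k)
            / (p ^ ((m + 1).choose 2) * pqInt p q (m + 1)) := by
    intro k _
    rw [pqBasis_eq hq hqp]
    unfold pqNode
    field_simp
  rw [Finset.sum_congr rfl point, ← Finset.sum_div, pq_sumA1 hq hqp]
  simp only [Nat.add_sub_cancel]
  rw [choose_two_succ, pow_add]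
  field_simp

include hq hqp in
lemma pq_central (n : ℕ) (hn : 1 ≤ n) (x : ℝ) :
    ∑ k ∈ Finset.range (n + 1), pqBasis p q n k x * (pqNode p q n k - x) ^ 2
      = p ^ (n - 1) / pqInt p q n * (x - x ^ 2) := by
  have hp0 : (0:ℝ) < p := hq.trans hqp
  obtain ⟨m, rfl⟩ : ∃ m, n = m + 1 := ⟨n - 1, by omega⟩
  have hN : pqInt p q (m + 1) ≠ 0 := (pqInt_pos hq hqp (by omega)).ne'
  have point : ∀ k ∈ Finset.range (m + 1 + 1),
      pqBasis p q (m + 1) k x * (pqNode p q (m + 1) k - x) ^ 2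
        = (pqA p q (m + 1) k x * (p ^ (m + 1 - k) * pqInt p q k) ^ 2
            - 2 * (x * pqInt p q (m + 1)) *
                (pqA p q (m + 1) k x * (p ^ (m + 1 - k) * pqInt p q k))
            + (x * pqInt p q (m + 1)) ^ 2 * pqA p q (m + 1) k x)
            / (p ^ ((m + 1).choose 2) * pqInt p q (m + 1) ^ 2) := by
    intro k _
    rw [pqBasis_eq hq hqp]
    unfold pqNode
    field_simp
    ring
  rw [Finset.sum_congr rfl point, ← Finset.sum_div]
  rw [Finset.sum_add_distrib, Finset.sum_sub_distrib, ← Finset.mul_sum, ← Finset.mul_sum]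
  rw [pq_sumA2 hq hqp, pq_sumA1 hq hqp, pq_sumA hq hqp]
  simp only [Nat.add_sub_cancel]
  have hE : pqInt p q (m + 1) = p ^ m + q * pqInt p q m := pqInt_succ_right p q m
  have hNe : p ^ m + q * pqInt p q m ≠ 0 := hE ▸ hN
  rw [choose_two_succ, pow_add, hE]
  field_simp
  ring

end PQ4
section PQ5

variable {p q : ℝ} (hq : 0 < q) (hqp : q < p) (hp : p ≤ 1)

include hq hqp hp in
lemma pqBasis_nonneg (n k : ℕ) {x : ℝ} (hx : x ∈ Set.Icc (0:ℝ) 1) :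
    0 ≤ pqBasis p q n k x := by
  have hp0 : (0:ℝ) < p := hq.trans hqp
  have hprod : 0 ≤ ∏ s ∈ Finset.range (n - k), (p ^ s - q ^ s * x) := by
    apply Finset.prod_nonneg
    intro s _
    have h1 : q ^ s ≤ p ^ s := pow_le_pow_left₀ hq.le hqp.le s
    have h2 : (0:ℝ) ≤ q ^ s := pow_nonneg hq.le s
    nlinarith [hx.1, hx.2]
  unfold pqBasis
  have := (pqChoose_pos hq hqp n k).le
  have hxk : (0:ℝ) ≤ x ^ k := pow_nonneg hx.1 k
  have hdiv : (0:ℝ) ≤ p ^ (k.choose 2) / p ^ (n.choose 2) :=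
    div_nonneg (pow_nonneg hp0.le _) (pow_nonneg hp0.le _)
  positivity

include hq hqp in
lemma pqNode_mem {n k : ℕ} (hn : 1 ≤ n) (hk : k ≤ n) :
    pqNode p q n k ∈ Set.Icc (0:ℝ) 1 := by
  have hp0 : (0:ℝ) < p := hq.trans hqp
  have hN : 0 < pqInt p q n := pqInt_pos hq hqp hn
  constructor
  · exact div_nonneg (mul_nonneg (pow_nonneg hp0.le _) (pqInt_nonneg hq hqp k)) hN.le
  · rw [pqNode, div_le_one hN]
    have := pqInt_add p q k (n - k)
    rw [show k + (n - k) = n by omega] at this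
    nlinarith [mul_nonneg (pow_nonneg hq.le k) (pqInt_nonneg hq hqp (n - k))]

end PQ5

section SUP

lemma supNorm2_nonneg (g : ℝ → ℝ → ℝ) : 0 ≤ supNorm2 g := by
  apply Real.sSup_nonneg
  rintro d ⟨x, hx, y, hy, rfl⟩
  exact abs_nonneg _

lemma abs_le_supNorm2 {F : ℝ → ℝ → ℝ}
    (hF : ContinuousOn (fun z : ℝ × ℝ => F z.1 z.2) (Set.Icc (0:ℝ) 1 ×ˢ Set.Icc (0:ℝ) 1))
    {x y : ℝ} (hx : x ∈ Set.Icc (0:ℝ) 1) (hy : y ∈ Set.Icc (0:ℝ) 1) :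
    |F x y| ≤ supNorm2 F := by
  have hK : IsCompact (Set.Icc (0:ℝ) 1 ×ˢ Set.Icc (0:ℝ) 1) :=
    (isCompact_Icc).prod isCompact_Icc
  obtain ⟨C, hC⟩ := hK.exists_bound_of_continuousOn hF
  apply le_csSup
  · refine ⟨C, ?_⟩
    rintro d ⟨a, ha, b, hb, rfl⟩
    exact hC (a, b) (Set.mk_mem_prod ha hb)
  · exact ⟨x, hx, y, hy, rfl⟩

end SUP
section TAYLOR

lemma taylor2_bound {h h' h'' : ℝ → ℝ} {M : ℝ}
    (hd : ∀ u ∈ Set.Icc (0:ℝ) 1, HasDerivAt h (h' u) u)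
    (hd' : ∀ u ∈ Set.Icc (0:ℝ) 1, HasDerivAt h' (h'' u) u)
    (hM : ∀ u ∈ Set.Icc (0:ℝ) 1, |h'' u| ≤ M)
    {x t : ℝ} (hx : x ∈ Set.Icc (0:ℝ) 1) (ht : t ∈ Set.Icc (0:ℝ) 1) :
    |h t - h x - h' x * (t - x)| ≤ M / 2 * (t - x) ^ 2 := by
  have hsub : Set.uIcc x t ⊆ Set.Icc (0:ℝ) 1 := by
    rw [Set.uIcc_eq_union]
    refine Set.union_subset (Set.Icc_subset_Icc hx.1 ht.2) (Set.Icc_subset_Icc ht.1 hx.2)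
  have lip : ∀ u ∈ Set.Icc (0:ℝ) 1, |h' u - h' x| ≤ M * |u - x| := by
    intro u hu
    rcases le_total x u with hxu | hux
    · have hsub2 : Set.Icc x u ⊆ Set.Icc (0:ℝ) 1 := Set.Icc_subset_Icc hx.1 hu.2
      have := Convex.norm_image_sub_le_of_norm_hasDerivWithin_le
        (f := h') (f' := h'') (s := Set.Icc x u)
        (fun v hv => (hd' v (hsub2 hv)).hasDerivWithinAt)
        (fun v hv => by rw [Real.norm_eq_abs]; exact hM v (hsub2 hv))
        (convex_Icc x u) (Set.left_mem_Icc.mpr hxu) (Set.right_mem_Icc.mpr hxu)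
      simpa [Real.norm_eq_abs] using this
    · have hsub2 : Set.Icc u x ⊆ Set.Icc (0:ℝ) 1 := Set.Icc_subset_Icc hu.1 hx.2
      have := Convex.norm_image_sub_le_of_norm_hasDerivWithin_le
        (f := h') (f' := h'') (s := Set.Icc u x)
        (fun v hv => (hd' v (hsub2 hv)).hasDerivWithinAt)
        (fun v hv => by rw [Real.norm_eq_abs]; exact hM v (hsub2 hv))
        (convex_Icc u x) (Set.right_mem_Icc.mpr hux) (Set.left_mem_Icc.mpr hux)
      simpa [Real.norm_eq_abs] using this
  have hM0 : 0 ≤ M := le_trans (abs_nonneg _) (hM x hx)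
  have hcont : ContinuousOn h' (Set.uIcc x t) := fun u hu =>
    ((hd' u (hsub hu)).continuousAt).continuousWithinAt
  have hint : IntervalIntegrable h' MeasureTheory.volume x t :=
    hcont.intervalIntegrable
  have hconst : IntervalIntegrable (fun _ : ℝ => h' x) MeasureTheory.volume x t :=
    intervalIntegrable_const
  have ftc : ∫ u in x..t, h' u = h t - h x :=
    intervalIntegral.integral_eq_sub_of_hasDerivAt (fun u hu => hd u (hsub hu)) hint
  have key : h t - h x - h' x * (t - x) = ∫ u in x..t, (h' u - h' x) := by
    rw [intervalIntegral.integral_sub hint hconst, ftc, intervalIntegral.integral_const,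
      smul_eq_mul]
    ring
  rw [key]
  rcases le_total x t with hxt | htx
  · calc |∫ u in x..t, (h' u - h' x)| ≤ ∫ u in x..t, |h' u - h' x| :=
          intervalIntegral.abs_integral_le_integral_abs hxt
      _ ≤ ∫ u in x..t, M * (u - x) := by
          apply intervalIntegral.integral_mono_on hxt
          · exact (hint.sub hconst).abs
          · exact (continuous_const.mul (continuous_id.sub continuous_const)).intervalIntegrable x t
          · intro u hu
            have := lip u (Set.Icc_subset_Icc hx.1 ht.2 hu)
            rwa [abs_of_nonneg (by linarith [hu.1] : (0:ℝ) ≤ u - x)] at this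
      _ = M / 2 * (t - x) ^ 2 := by
          rw [intervalIntegral.integral_const_mul]
          rw [show (∫ u in x..t, (u - x)) = ∫ u in x - x..t - x, u from
            intervalIntegral.integral_comp_sub_right (fun u => u) x]
          rw [sub_self, integral_id]
          ring
  · have habs : |∫ u in x..t, (h' u - h' x)| = |∫ u in t..x, (h' u - h' x)| := by
      rw [intervalIntegral.integral_symm, abs_neg]
    rw [habs]
    calc |∫ u in t..x, (h' u - h' x)| ≤ ∫ u in t..x, |h' u - h' x| :=
          intervalIntegral.abs_integral_le_integral_abs htx
      _ ≤ ∫ u in t..x, M * (x - u) := by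
          apply intervalIntegral.integral_mono_on htx
          · have hcont2 : ContinuousOn h' (Set.uIcc t x) := by
              rw [Set.uIcc_comm] at hcont
              exact hcont
            exact ((hcont2.intervalIntegrable).sub intervalIntegrable_const).abs
          · exact (continuous_const.mul (continuous_const.sub continuous_id)).intervalIntegrable t x
          · intro u hu
            have := lip u (Set.Icc_subset_Icc ht.1 hx.2 hu)
            rwa [abs_of_nonpos (by linarith [hu.2] : u - x ≤ 0), neg_sub] at this
      _ = M / 2 * (t - x) ^ 2 := by
          rw [intervalIntegral.integral_const_mul]
          rw [show (∫ u in t..x, (x - u)) = ∫ u in x - x..x - t, u from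
            intervalIntegral.integral_comp_sub_left (fun u => u) x]
          rw [sub_self, integral_id]
          ring

end TAYLOR
section CORE

lemma core_bound (n m : ℕ) (b c t s : ℕ → ℝ) (f g : ℝ → ℝ → ℝ) (x y m₁ m₂ : ℝ)
    (hx : x ∈ Set.Icc (0:ℝ) 1) (hy : y ∈ Set.Icc (0:ℝ) 1)
    (hbnn : ∀ k ∈ Finset.range (n + 1), 0 ≤ b k)
    (hcnn : ∀ j ∈ Finset.range (m + 1), 0 ≤ c j)
    (htmem : ∀ k ∈ Finset.range (n + 1), t k ∈ Set.Icc (0:ℝ) 1)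
    (hsmem : ∀ j ∈ Finset.range (m + 1), s j ∈ Set.Icc (0:ℝ) 1)
    (hb1 : ∑ k ∈ Finset.range (n + 1), b k = 1)
    (hc1 : ∑ j ∈ Finset.range (m + 1), c j = 1)
    (hbt : ∑ k ∈ Finset.range (n + 1), b k * t k = x)
    (hcs : ∑ j ∈ Finset.range (m + 1), c j * s j = y)
    (hbx : ∑ k ∈ Finset.range (n + 1), b k * (t k - x) ^ 2 = m₁)
    (hcy : ∑ j ∈ Finset.range (m + 1), c j * (s j - y) ^ 2 = m₂)
    (hf : ContinuousOn (fun z : ℝ × ℝ => f z.1 z.2) (Set.Icc (0:ℝ) 1 ×ˢ Set.Icc (0:ℝ) 1))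
    (hg : IsC2On01 g) :
    |(∑ k ∈ Finset.range (n + 1), ∑ j ∈ Finset.range (m + 1),
        b k * c j * f (t k) (s j)) - f x y| ≤
      2 * supNorm2 (fun a b => f a b - g a b)
        + supNorm2 (pdx (pdx g)) / 2 * m₁ + supNorm2 (pdy (pdy g)) / 2 * m₂ := by
  obtain ⟨hgc, hgd, hgdx, hgdy, hgdxx, hgdyy⟩ := hg
  have hMx0 : 0 ≤ supNorm2 (pdx (pdx g)) := supNorm2_nonneg _
  have hMy0 : 0 ≤ supNorm2 (pdy (pdy g)) := supNorm2_nonneg _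
  -- Taylor bounds
  have R1 : ∀ u ∈ Set.Icc (0:ℝ) 1,
      |g u y - g x y - pdx g x y * (u - x)| ≤ supNorm2 (pdx (pdx g)) / 2 * (u - x) ^ 2 := by
    intro u hu
    exact taylor2_bound (h := fun w => g w y) (h' := fun w => pdx g w y)
      (h'' := fun w => pdx (pdx g) w y)
      (fun v hv => ((hgd v hv y hy).1).hasDerivAt)
      (fun v hv => ((hgd v hv y hy).2.1).hasDerivAt)
      (fun v hv => abs_le_supNorm2 hgdxx hv hy) hx hu
  have R2 : ∀ u ∈ Set.Icc (0:ℝ) 1, ∀ v ∈ Set.Icc (0:ℝ) 1,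
      |g u v - g u y - pdy g u y * (v - y)| ≤ supNorm2 (pdy (pdy g)) / 2 * (v - y) ^ 2 := by
    intro u hu v hv
    exact taylor2_bound (h := fun w => g u w) (h' := fun w => pdy g u w)
      (h'' := fun w => pdy (pdy g) u w)
      (fun w hw => ((hgd u hu w hw).2.2.1).hasDerivAt)
      (fun w hw => ((hgd u hu w hw).2.2.2).hasDerivAt)
      (fun w hw => abs_le_supNorm2 hgdyy hu hw) hy hv
  -- product sum helper
  have lem3 : ∀ u v : ℕ → ℝ,
      (∑ k ∈ Finset.range (n + 1), ∑ j ∈ Finset.range (m + 1), b k * c j * (u k * v j))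
        = (∑ k ∈ Finset.range (n + 1), b k * u k) * (∑ j ∈ Finset.range (m + 1), c j * v j) := by
    intro u v
    rw [Finset.sum_mul_sum]
    exact Finset.sum_congr rfl fun k _ => Finset.sum_congr rfl fun j _ => by ring
  have hct : ∑ j ∈ Finset.range (m + 1), c j * (1:ℝ) = 1 := by simpa using hc1
  have hbt0 : ∑ k ∈ Finset.range (n + 1), b k * (t k - x) = 0 := by
    have : ∀ k ∈ Finset.range (n + 1), b k * (t k - x) = b k * t k - x * b k :=
      fun k _ => by ring
    rw [Finset.sum_congr rfl this, Finset.sum_sub_distrib, hbt, ← Finset.mul_sum, hb1]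
    ring
  have hcs0 : ∑ j ∈ Finset.range (m + 1), c j * (s j - y) = 0 := by
    have : ∀ j ∈ Finset.range (m + 1), c j * (s j - y) = c j * s j - y * c j :=
      fun j _ => by ring
    rw [Finset.sum_congr rfl this, Finset.sum_sub_distrib, hcs, ← Finset.mul_sum, hc1]
    ring
  -- decomposition
  have expand : ∀ k ∈ Finset.range (n + 1), ∀ j ∈ Finset.range (m + 1),
      b k * c j * f (t k) (s j)
        = b k * c j * ((f (t k) (s j) - g (t k) (s j)) - (f x y - g x y))
          + b k * c j * ((g (t k) y - g x y - pdx g x y * (t k - x)) * 1)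
          + b k * c j * (g (t k) (s j) - g (t k) y - pdy g (t k) y * (s j - y))
          + b k * c j * ((pdx g x y * (t k - x)) * 1)
          + b k * c j * (pdy g (t k) y * (s j - y))
          + b k * c j * (f x y * 1) := fun k _ j _ => by ring
  have split : (∑ k ∈ Finset.range (n + 1), ∑ j ∈ Finset.range (m + 1),
        b k * c j * f (t k) (s j))
      = (∑ k ∈ Finset.range (n + 1), ∑ j ∈ Finset.range (m + 1),
          b k * c j * ((f (t k) (s j) - g (t k) (s j)) - (f x y - g x y)))
        + (∑ k ∈ Finset.range (n + 1), ∑ j ∈ Finset.range (m + 1),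
            b k * c j * ((g (t k) y - g x y - pdx g x y * (t k - x)) * 1))
        + (∑ k ∈ Finset.range (n + 1), ∑ j ∈ Finset.range (m + 1),
            b k * c j * (g (t k) (s j) - g (t k) y - pdy g (t k) y * (s j - y)))
        + f x y := by
    have z4 : (∑ k ∈ Finset.range (n + 1), ∑ j ∈ Finset.range (m + 1),
        b k * c j * ((pdx g x y * (t k - x)) * 1)) = 0 := by
      rw [lem3, hct, mul_one]
      have : ∑ k ∈ Finset.range (n + 1), b k * (pdx g x y * (t k - x))
          = pdx g x y * ∑ k ∈ Finset.range (n + 1), b k * (t k - x) := by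
        rw [Finset.mul_sum]
        exact Finset.sum_congr rfl fun k _ => by ring
      rw [this, hbt0, mul_zero]
    have z5 : (∑ k ∈ Finset.range (n + 1), ∑ j ∈ Finset.range (m + 1),
        b k * c j * (pdy g (t k) y * (s j - y))) = 0 := by
      rw [lem3, hcs0, mul_zero]
    have z6 : (∑ k ∈ Finset.range (n + 1), ∑ j ∈ Finset.range (m + 1),
        b k * c j * (f x y * 1)) = f x y := by
      rw [lem3, hct, mul_one]
      have : ∑ k ∈ Finset.range (n + 1), b k * f x y
          = (∑ k ∈ Finset.range (n + 1), b k) * f x y := by rw [Finset.sum_mul]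
      rw [this, hb1, one_mul]
    calc (∑ k ∈ Finset.range (n + 1), ∑ j ∈ Finset.range (m + 1), b k * c j * f (t k) (s j))
        = ∑ k ∈ Finset.range (n + 1), ∑ j ∈ Finset.range (m + 1),
            (b k * c j * ((f (t k) (s j) - g (t k) (s j)) - (f x y - g x y))
              + b k * c j * ((g (t k) y - g x y - pdx g x y * (t k - x)) * 1)
              + b k * c j * (g (t k) (s j) - g (t k) y - pdy g (t k) y * (s j - y))
              + b k * c j * ((pdx g x y * (t k - x)) * 1)
              + b k * c j * (pdy g (t k) y * (s j - y))
              + b k * c j * (f x y * 1)) :=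
          Finset.sum_congr rfl fun k hk => Finset.sum_congr rfl fun j hj => expand k hk j hj
      _ = _ := by
          simp only [Finset.sum_add_distrib]
          rw [z4, z5, z6]
          ring
  -- generic abs bound
  have habs : ∀ u B : ℕ → ℕ → ℝ,
      (∀ k ∈ Finset.range (n + 1), ∀ j ∈ Finset.range (m + 1), |u k j| ≤ B k j) →
      |∑ k ∈ Finset.range (n + 1), ∑ j ∈ Finset.range (m + 1), b k * c j * u k j|
        ≤ ∑ k ∈ Finset.range (n + 1), ∑ j ∈ Finset.range (m + 1), b k * c j * B k j := by
    intro u B hu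
    calc |∑ k ∈ Finset.range (n + 1), ∑ j ∈ Finset.range (m + 1), b k * c j * u k j|
        ≤ ∑ k ∈ Finset.range (n + 1), |∑ j ∈ Finset.range (m + 1), b k * c j * u k j| :=
          Finset.abs_sum_le_sum_abs _ _
      _ ≤ ∑ k ∈ Finset.range (n + 1), ∑ j ∈ Finset.range (m + 1), |b k * c j * u k j| :=
          Finset.sum_le_sum fun k _ => Finset.abs_sum_le_sum_abs _ _
      _ ≤ _ := by
          refine Finset.sum_le_sum fun k hk => Finset.sum_le_sum fun j hj => ?_
          rw [abs_mul, abs_mul, abs_of_nonneg (hbnn k hk), abs_of_nonneg (hcnn j hj)]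
          exact mul_le_mul_of_nonneg_left (hu k hk j hj)
            (mul_nonneg (hbnn k hk) (hcnn j hj))
  -- bound Σ1
  have hFg : ContinuousOn (fun z : ℝ × ℝ => f z.1 z.2 - g z.1 z.2)
      (Set.Icc (0:ℝ) 1 ×ˢ Set.Icc (0:ℝ) 1) := hf.sub hgc
  have hNf : ∀ a ∈ Set.Icc (0:ℝ) 1, ∀ b' ∈ Set.Icc (0:ℝ) 1,
      |f a b' - g a b'| ≤ supNorm2 (fun a b => f a b - g a b) :=
    fun a ha b' hb' => abs_le_supNorm2 (F := fun a b => f a b - g a b) hFg ha hb'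
  have bound1 : |∑ k ∈ Finset.range (n + 1), ∑ j ∈ Finset.range (m + 1),
        b k * c j * ((f (t k) (s j) - g (t k) (s j)) - (f x y - g x y))|
      ≤ 2 * supNorm2 (fun a b => f a b - g a b) := by
    have h := habs (fun k j => (f (t k) (s j) - g (t k) (s j)) - (f x y - g x y))
      (fun _ _ => (2 * supNorm2 (fun a b => f a b - g a b)) * 1) ?_
    · refine h.trans ?_
      rw [lem3 (fun _ => 2 * supNorm2 (fun a b => f a b - g a b)) (fun _ => 1), hct, mul_one]
      rw [show (∑ k ∈ Finset.range (n + 1), b k * (2 * supNorm2 (fun a b => f a b - g a b)))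
          = (∑ k ∈ Finset.range (n + 1), b k) * (2 * supNorm2 (fun a b => f a b - g a b)) from
          (Finset.sum_mul ..).symm, hb1, one_mul]
    · intro k hk j hj
      beta_reduce
      rw [mul_one]
      calc |(f (t k) (s j) - g (t k) (s j)) - (f x y - g x y)|
          ≤ |f (t k) (s j) - g (t k) (s j)| + |f x y - g x y| := abs_sub _ _
        _ ≤ _ := by
            have h1 := hNf (t k) (htmem k hk) (s j) (hsmem j hj)
            have h2 := hNf x hx y hy
            linarith
  -- bound Σ2
  have bound2 : |∑ k ∈ Finset.range (n + 1), ∑ j ∈ Finset.range (m + 1),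
        b k * c j * ((g (t k) y - g x y - pdx g x y * (t k - x)) * 1)|
      ≤ supNorm2 (pdx (pdx g)) / 2 * m₁ := by
    have h := habs (fun k _ => (g (t k) y - g x y - pdx g x y * (t k - x)) * 1)
      (fun k _ => (supNorm2 (pdx (pdx g)) / 2 * (t k - x) ^ 2) * 1) ?_
    · refine h.trans ?_
      rw [lem3 (fun k => supNorm2 (pdx (pdx g)) / 2 * (t k - x) ^ 2) (fun _ => 1), hct, mul_one]
      rw [show (∑ k ∈ Finset.range (n + 1),
            b k * (supNorm2 (pdx (pdx g)) / 2 * (t k - x) ^ 2))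
          = supNorm2 (pdx (pdx g)) / 2 *
            ∑ k ∈ Finset.range (n + 1), b k * (t k - x) ^ 2 from by
          rw [Finset.mul_sum]; exact Finset.sum_congr rfl fun k _ => by ring, hbx]
    · intro k hk j hj
      beta_reduce
      rw [mul_one, mul_one]
      exact R1 (t k) (htmem k hk)
  -- bound Σ3
  have bound3 : |∑ k ∈ Finset.range (n + 1), ∑ j ∈ Finset.range (m + 1),
        b k * c j * (g (t k) (s j) - g (t k) y - pdy g (t k) y * (s j - y))|
      ≤ supNorm2 (pdy (pdy g)) / 2 * m₂ := by
    have h := habs (fun k j => g (t k) (s j) - g (t k) y - pdy g (t k) y * (s j - y))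
      (fun _ j => 1 * (supNorm2 (pdy (pdy g)) / 2 * (s j - y) ^ 2)) ?_
    · refine h.trans ?_
      rw [lem3 (fun _ => (1:ℝ)) (fun j => supNorm2 (pdy (pdy g)) / 2 * (s j - y) ^ 2)]
      rw [show (∑ k ∈ Finset.range (n + 1), b k * (1:ℝ))
          = (1:ℝ) from by simpa using hb1, one_mul]
      rw [show (∑ j ∈ Finset.range (m + 1),
            c j * (supNorm2 (pdy (pdy g)) / 2 * (s j - y) ^ 2))
          = supNorm2 (pdy (pdy g)) / 2 *
            ∑ j ∈ Finset.range (m + 1), c j * (s j - y) ^ 2 from by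
          rw [Finset.mul_sum]; exact Finset.sum_congr rfl fun j _ => by ring, hcy]
    · intro k hk j hj
      beta_reduce
      rw [one_mul]
      exact R2 (t k) (htmem k hk) (s j) (hsmem j hj)
  rw [split]
  set A1 := ∑ k ∈ Finset.range (n + 1), ∑ j ∈ Finset.range (m + 1),
      b k * c j * ((f (t k) (s j) - g (t k) (s j)) - (f x y - g x y)) with hA1
  set A2 := ∑ k ∈ Finset.range (n + 1), ∑ j ∈ Finset.range (m + 1),
      b k * c j * ((g (t k) y - g x y - pdx g x y * (t k - x)) * 1) with hA2
  set A3 := ∑ k ∈ Finset.range (n + 1), ∑ j ∈ Finset.range (m + 1),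
      b k * c j * (g (t k) (s j) - g (t k) y - pdy g (t k) y * (s j - y)) with hA3
  rw [show A1 + A2 + A3 + f x y - f x y = A1 + A2 + A3 by ring]
  calc |A1 + A2 + A3| ≤ |A1 + A2| + |A3| := abs_add_le _ _
    _ ≤ |A1| + |A2| + |A3| := by linarith [abs_add_le A1 A2]
    _ ≤ _ := by linarith [bound1, bound2, bound3]

end CORE

lemma zero_isC2 : IsC2On01 (fun _ _ => (0:ℝ)) := by
  have pdx0 : pdx (fun _ _ => (0:ℝ)) = fun _ _ => (0:ℝ) := by
    funext a b; simp [pdx]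
  have pdy0 : pdy (fun _ _ => (0:ℝ)) = fun _ _ => (0:ℝ) := by
    funext a b; simp [pdy]
  refine ⟨continuousOn_const, fun a _ b _ => ⟨?_, ?_, ?_, ?_⟩, ?_, ?_, ?_, ?_⟩
  · exact differentiableAt_const 0
  · simp only [pdx0]; exact differentiableAt_const 0
  · exact differentiableAt_const 0
  · simp only [pdy0]; exact differentiableAt_const 0
  · simp only [pdx0]; exact continuousOn_const
  · simp only [pdy0]; exact continuousOn_const
  · simp only [pdx0]; exact continuousOn_const
  · simp only [pdy0]; exact continuousOn_const


theorem pqBernstein2_rate_peetreK (p₁ q₁ p₂ q₂ : ℝ) (n m : ℕ)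
    (hq₁ : 0 < q₁) (hq₁p₁ : q₁ < p₁) (hp₁ : p₁ ≤ 1)
    (hq₂ : 0 < q₂) (hq₂p₂ : q₂ < p₂) (hp₂ : p₂ ≤ 1)
    (hn : 1 ≤ n) (hm : 1 ≤ m) (f : ℝ → ℝ → ℝ)
    (hf : ContinuousOn (fun z : ℝ × ℝ => f z.1 z.2)
      (Set.Icc (0 : ℝ) 1 ×ˢ Set.Icc (0 : ℝ) 1))
    (x y : ℝ) (hx : x ∈ Set.Icc (0 : ℝ) 1) (hy : y ∈ Set.Icc (0 : ℝ) 1) :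
    |pqBernstein2 p₁ q₁ p₂ q₂ n m f x y - f x y| ≤
      2 * peetreK f
        ((1 / 2) * max ((p₁ ^ (n - 1) / pqInt p₁ q₁ n) * (x - x ^ 2))
          ((p₂ ^ (m - 1) / pqInt p₂ q₂ m) * (y - y ^ 2)) / 2) := by
  have hp₁0 : (0:ℝ) < p₁ := hq₁.trans hq₁p₁
  have hm₁0 : 0 ≤ p₁ ^ (n - 1) / pqInt p₁ q₁ n * (x - x ^ 2) :=
    mul_nonneg (div_nonneg (pow_nonneg hp₁0.le _) (pqInt_nonneg hq₁ hq₁p₁ n))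
      (by nlinarith [hx.1, hx.2])
  set Mm := max ((p₁ ^ (n - 1) / pqInt p₁ q₁ n) * (x - x ^ 2))
      ((p₂ ^ (m - 1) / pqInt p₂ q₂ m) * (y - y ^ 2)) with hMmdef
  have hMm0 : 0 ≤ Mm := le_trans hm₁0 (le_max_left _ _)
  have key : ∀ g, IsC2On01 g →
      |pqBernstein2 p₁ q₁ p₂ q₂ n m f x y - f x y|
        ≤ 2 * (supNorm2 (fun a b => f a b - g a b) + (1 / 2 * Mm / 2) * C2Norm g) := by
    intro g hg
    have hcore := core_bound n m (fun k => pqBasis p₁ q₁ n k x) (fun j => pqBasis p₂ q₂ m j y)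
      (fun k => pqNode p₁ q₁ n k) (fun j => pqNode p₂ q₂ m j) f g x y
      (p₁ ^ (n - 1) / pqInt p₁ q₁ n * (x - x ^ 2))
      (p₂ ^ (m - 1) / pqInt p₂ q₂ m * (y - y ^ 2)) hx hy
      (fun k _ => pqBasis_nonneg hq₁ hq₁p₁ hp₁ n k hx)
      (fun j _ => pqBasis_nonneg hq₂ hq₂p₂ hp₂ m j hy)
      (fun k hk => pqNode_mem hq₁ hq₁p₁ hn (Nat.lt_succ_iff.mp (Finset.mem_range.mp hk)))
      (fun j hj => pqNode_mem hq₂ hq₂p₂ hm (Nat.lt_succ_iff.mp (Finset.mem_range.mp hj)))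
      (pq_partition hq₁ hq₁p₁ n x) (pq_partition hq₂ hq₂p₂ m y)
      (pq_moment1 hq₁ hq₁p₁ hn x) (pq_moment1 hq₂ hq₂p₂ hm y)
      (pq_central hq₁ hq₁p₁ n hn x) (pq_central hq₂ hq₂p₂ m hm y)
      hf hg
    have hBf : pqBernstein2 p₁ q₁ p₂ q₂ n m f x y
        = ∑ k ∈ Finset.range (n + 1), ∑ j ∈ Finset.range (m + 1),
            (fun k => pqBasis p₁ q₁ n k x) k * (fun j => pqBasis p₂ q₂ m j y) j *
              f ((fun k => pqNode p₁ q₁ n k) k) ((fun j => pqNode p₂ q₂ m j) j) := rfl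
    rw [hBf]
    refine hcore.trans ?_
    have hMx0 : 0 ≤ supNorm2 (pdx (pdx g)) := supNorm2_nonneg _
    have hMy0 : 0 ≤ supNorm2 (pdy (pdy g)) := supNorm2_nonneg _
    have hC2 : supNorm2 (pdx (pdx g)) + supNorm2 (pdy (pdy g)) ≤ C2Norm g := by
      have h1 := supNorm2_nonneg g
      have h2 := supNorm2_nonneg (pdx g)
      have h3 := supNorm2_nonneg (pdy g)
      unfold C2Norm
      linarith
    have A1 : supNorm2 (pdx (pdx g)) * (p₁ ^ (n - 1) / pqInt p₁ q₁ n * (x - x ^ 2))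
        ≤ supNorm2 (pdx (pdx g)) * Mm :=
      mul_le_mul_of_nonneg_left (le_max_left _ _) hMx0
    have A2 : supNorm2 (pdy (pdy g)) * (p₂ ^ (m - 1) / pqInt p₂ q₂ m * (y - y ^ 2))
        ≤ supNorm2 (pdy (pdy g)) * Mm :=
      mul_le_mul_of_nonneg_left (le_max_right _ _) hMy0
    have A3 : Mm * (supNorm2 (pdx (pdx g)) + supNorm2 (pdy (pdy g))) ≤ Mm * C2Norm g :=
      mul_le_mul_of_nonneg_left hC2 hMm0
    nlinarith [A1, A2, A3]
  rw [peetreK]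
  have hne : {d : ℝ | ∃ g : ℝ → ℝ → ℝ, IsC2On01 g ∧
      d = supNorm2 (fun x y => f x y - g x y) + (1 / 2 * Mm / 2) * C2Norm g}.Nonempty :=
    ⟨_, ⟨fun _ _ => 0, zero_isC2, rfl⟩⟩
  have hlow : ∀ d ∈ {d : ℝ | ∃ g : ℝ → ℝ → ℝ, IsC2On01 g ∧
      d = supNorm2 (fun x y => f x y - g x y) + (1 / 2 * Mm / 2) * C2Norm g},
      |pqBernstein2 p₁ q₁ p₂ q₂ n m f x y - f x y| / 2 ≤ d := by
    rintro d ⟨g, hg, rfl⟩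
    linarith [key g hg]
  have := le_csInf hne hlow
  linarith
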